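/- arXiv:1712.00939 — 2 statements merged into one kernel-verified Lean document; each statement's English description precedes it below -/
import Mathlib

section
/- Let n ≥ 4 be an even integer and let m ≥ n/2. Then for every Y ∈ ℝ^n and all X ≠ Y, Δ_X 𝒦_m(X,Y) = 𝒦_{m−1}(X,Y), where Δ_X denotes the Laplacian with respect to the X variable. (For m = n/2 the right-hand side is given by the power formula for 𝒦_{n/2−1}, and for m > n/2 by the logarithmic formula for 𝒦_{m−1}.) -/
open MeasureTheory Filter Metric Set Topology
open scoped ENNReal NNReal RealInnerProductSpace

noncomputable section

/-- `n`-dimensional Euclidean space. -/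
abbrev Euc (n : ℕ) : Type := EuclideanSpace ℝ (Fin n)

/-- The surface measure on `∂D`: the `(n-1)`-dimensional Hausdorff measure
restricted to the boundary of `D`. -/
def surfMeasure (n : ℕ) (D : Set (Euc n)) : Measure (Euc n) :=
  (Measure.hausdorffMeasure ((n : ℝ) - 1)).restrict (frontier D)

/-- `ω_{n-1} = 2 π^{n/2} / Γ(n/2)`, the surface area of the unit sphere in `ℝⁿ`. -/
def sphereArea (n : ℕ) : ℝ := 2 * Real.pi ^ ((n : ℝ) / 2) / Real.Gamma ((n : ℝ) / 2)

/-- First (horizontal) component of a point in the chart target space. -/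
def chartFst {k : ℕ} (y : WithLp 2 (Euc k × ℝ)) : Euc k := ((WithLp.equiv 2 (Euc k × ℝ)) y).1

/-- Second (vertical) component of a point in the chart target space. -/
def chartSnd {k : ℕ} (y : WithLp 2 (Euc k × ℝ)) : ℝ := ((WithLp.equiv 2 (Euc k × ℝ)) y).2

/-- `U, A, φ` is a graph chart for `D` near the boundary point `Q`: `U` is an open
neighborhood of `Q` and, in the rigid coordinates given by the (affine) isometry `A`,
`D` coincides near `Q` with the region above the graph of `φ` and `∂D` with the graph. -/
def IsGraphChartAt (n : ℕ) (D : Set (Euc n)) (Q : Euc n) (U : Set (Euc n))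
    (A : Euc n ≃ᵃⁱ[ℝ] WithLp 2 (Euc (n - 1) × ℝ)) (φ : Euc (n - 1) → ℝ) : Prop :=
  IsOpen U ∧ Q ∈ U ∧
    (∀ X ∈ U, (X ∈ D ↔ φ (chartFst (A X)) < chartSnd (A X))) ∧
    (∀ X ∈ U, (X ∈ frontier D ↔ chartSnd (A X) = φ (chartFst (A X))))

/-- `D ⊆ ℝⁿ` is a bounded Lipschitz domain with Lipschitz character (at most) `L`. -/
def IsBddLipschitzDomain (n : ℕ) (L : ℝ) (D : Set (Euc n)) : Prop :=
  IsOpen D ∧ Bornology.IsBounded D ∧ IsConnected D ∧ IsConnected (frontier D) ∧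
    ∀ Q ∈ frontier D, ∃ U A φ, LipschitzWith (Real.toNNReal L) φ ∧ IsGraphChartAt n D Q U A φ

/-- `D ⊆ ℝⁿ` is a bounded `C¹` domain. -/
def IsBddC1Domain (n : ℕ) (D : Set (Euc n)) : Prop :=
  IsOpen D ∧ Bornology.IsBounded D ∧ IsConnected D ∧ IsConnected (frontier D) ∧
    ∀ Q ∈ frontier D, ∃ U A φ, ContDiff ℝ 1 φ ∧ IsGraphChartAt n D Q U A φ

/-- `ν` is the outward unit normal of `D` at the boundary point `P`: in suitable graph
coordinates in which `D` lies above the graph of `φ`, the function `φ` is differentiable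
at the point below `P` with gradient `gφ` and `ν = (gφ, -1)/√(1+|gφ|²)` in these coordinates. -/
def IsOutwardNormalAt (n : ℕ) (D : Set (Euc n)) (P : Euc n) (ν : Euc n) : Prop :=
  ∃ (U : Set (Euc n)) (A : Euc n ≃ᵃⁱ[ℝ] WithLp 2 (Euc (n - 1) × ℝ)) (φ : Euc (n - 1) → ℝ)
    (L : ℝ≥0), LipschitzWith L φ ∧ IsGraphChartAt n D P U A φ ∧
    ∃ gφ : Euc (n - 1), HasGradientAt φ gφ (chartFst (A P)) ∧
      A.linearIsometryEquiv ν =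
        (Real.sqrt (1 + ‖gφ‖ ^ 2))⁻¹ • (WithLp.equiv 2 (Euc (n - 1) × ℝ)).symm (gφ, -1)

/-- The interior non-tangential cone `Γ_γ(P)` with vertex `P ∈ ∂D` and aperture `γ`. -/
def ntCone {n : ℕ} (γ : ℝ) (D : Set (Euc n)) (P : Euc n) : Set (Euc n) :=
  {X | X ∈ D ∧ dist X P < γ * Metric.infDist X (frontier D)}

/-- The exterior non-tangential cone `Γ̃_γ(P)`. -/
def ntConeExt {n : ℕ} (γ : ℝ) (D : Set (Euc n)) (P : Euc n) : Set (Euc n) :=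
  {X | X ∉ closure D ∧ dist X P < γ * Metric.infDist X (frontier D)}

/-- The non-tangential maximal function `M(F)(P) = sup_{X ∈ Γ_γ(P)} |F(X)|`,
valued in `ℝ≥0∞`. -/
def ntMax {n : ℕ} {E : Type*} [NormedAddCommGroup E] (γ : ℝ) (D : Set (Euc n))
    (F : Euc n → E) (P : Euc n) : ℝ≥0∞ :=
  ⨆ X ∈ ntCone γ D P, (‖F X‖₊ : ℝ≥0∞)

/-- The `L^p` norm of an `ℝ≥0∞`-valued function. -/
def eLpNormENN {α : Type*} [MeasurableSpace α] (g : α → ℝ≥0∞) (p : ℝ≥0∞)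
    (μ : Measure α) : ℝ≥0∞ :=
  if p = ∞ then essSup g μ else (∫⁻ x, g x ^ p.toReal ∂μ) ^ (1 / p.toReal)

/-- The Laplacian `Δu = Σᵢ ∂²u/∂xᵢ²` on `ℝⁿ`. -/
def lap {n : ℕ} (u : Euc n → ℝ) : Euc n → ℝ := fun X =>
  ∑ i : Fin n, fderiv ℝ (fun Y => fderiv ℝ u Y (EuclideanSpace.single i (1 : ℝ))) X
    (EuclideanSpace.single i (1 : ℝ))

/-- The single layer potential `𝒮f`. -/
def slp (n : ℕ) (σ : Measure (Euc n)) (f : Euc n → ℝ) (X : Euc n) : ℝ :=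
  (1 / (sphereArea n * (2 - (n : ℝ)))) * ∫ Q, ‖X - Q‖ ^ (2 - (n : ℝ)) * f Q ∂σ

/-- `KstarAt n σ N f P K` says that the principal value `K*f(P)` exists and equals `K`. -/
def KstarAt (n : ℕ) (σ : Measure (Euc n)) (N : Euc n → Euc n) (f : Euc n → ℝ)
    (P : Euc n) (K : ℝ) : Prop :=
  Tendsto (fun ε : ℝ =>
      (1 / sphereArea n) * ∫ Q in {Q | ε < dist Q P},
        (⟪P - Q, N P⟫ / dist P Q ^ (n : ℕ)) * f Q ∂σ)
    (𝓝[>] (0 : ℝ)) (𝓝 K)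

/-- The Robin coefficient conditions (2.7)–(2.9) for the exponent `p`:
`b ≥ 0` a.e. and `b` not a.e. `0`; `b ∈ L^{n-1}(∂D)`; and `b ∈ L^s` for some `s > 2`
whenever `p = 2` or `n = 3`. -/
def RobinCoef (n : ℕ) (σ : Measure (Euc n)) (p : ℝ) (b : Euc n → ℝ) : Prop :=
  (∀ᵐ P ∂σ, 0 ≤ b P) ∧ ¬(b =ᵐ[σ] (fun _ => (0 : ℝ))) ∧
    MemLp b (ENNReal.ofReal ((n : ℝ) - 1)) σ ∧
    ((p = 2 ∨ n = 3) → ∃ s : ℝ, 2 < s ∧ MemLp b (ENNReal.ofReal s) σ)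

/-- `δ_s = s (s + n - 2)`. -/
def deltaS (n : ℕ) (s : ℝ) : ℝ := s * (s + (n : ℝ) - 2)

/-- `γ_k = δ_{2k - n + 2}`. -/
def gamK (n k : ℕ) : ℝ := deltaS n (2 * (k : ℝ) - (n : ℝ) + 2)

/-- The constant `c_m = 1/n - Σ_{t=1}^{m - n/2} (1/(2t) + 1/(2t + n - 2))`. -/
def polyC (n m : ℕ) : ℝ :=
  1 / (n : ℝ) - ∑ t ∈ Finset.Icc 1 (m - n / 2), (1 / (2 * (t : ℝ)) + 1 / (2 * (t : ℝ) + (n : ℝ) - 2))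

/-- The `m`-th order polyharmonic fundamental solution `𝒦_m(X, Y)` in `ℝⁿ`. -/
def polyK (n m : ℕ) (X Y : Euc n) : ℝ :=
  if m = 1 then ‖X - Y‖ ^ (2 - (n : ℝ)) / (((n : ℝ) - 2) * sphereArea n)
  else if Odd n ∨ 2 * m ≤ n - 2 then
    ‖X - Y‖ ^ (2 * (m : ℝ) - (n : ℝ)) /
      (((n : ℝ) - 2) * sphereArea n * ∏ k ∈ Finset.Icc 1 (m - 1), gamK n k)
  else
    ‖X - Y‖ ^ (2 * (m : ℝ) - (n : ℝ)) * (Real.log ‖X - Y‖ + polyC n m) /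
      (((n : ℝ) - 2) ^ 2 * sphereArea n * (∏ k ∈ Finset.Icc 1 (n / 2 - 2), gamK n k) *
        ∏ t ∈ Finset.Icc 1 (m - n / 2), deltaS n (2 * (t : ℝ)))

/-- The `j`-th layer `𝒮`-potential `𝓜_j f`. -/
def mlp (n j : ℕ) (σ : Measure (Euc n)) (f : Euc n → ℝ) (X : Euc n) : ℝ :=
  ∫ Q, polyK n j X Q * f Q ∂σ

/-- The boundary operator `K_j^* f(P) = ∫_{∂D} ⟨∇_X 𝒦_j(P,Q), N(P)⟩ f(Q) dσ(Q)`. -/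
def KjStar (n j : ℕ) (σ : Measure (Euc n)) (N : Euc n → Euc n) (f : Euc n → ℝ)
    (P : Euc n) : ℝ :=
  ∫ Q, ⟪gradient (fun X => polyK n j X Q) P, N P⟫ * f Q ∂σ


lemma lap_radial {n : ℕ} (f f' f'' : ℝ → ℝ)
    (hf : ∀ t : ℝ, 0 < t → HasDerivAt f (f' t) t)
    (hf' : ∀ t : ℝ, 0 < t → HasDerivAt f' (f'' t) t)
    (Y X : Euc n) (hXY : X ≠ Y) :
    lap (fun Z => f (‖Z - Y‖ ^ 2)) X
      = 4 * ‖X - Y‖ ^ 2 * f'' (‖X - Y‖ ^ 2) + 2 * n * f' (‖X - Y‖ ^ 2) := by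
  have hqpos : ∀ Z : Euc n, Z ≠ Y → (0:ℝ) < ‖Z - Y‖ ^ 2 := fun Z hZ =>
    pow_pos (norm_pos_iff.2 (sub_ne_zero.2 hZ)) 2
  have hq : ∀ Z : Euc n, HasFDerivAt (fun W : Euc n => ‖W - Y‖ ^ 2)
      (2 • (innerSL ℝ (Z - Y)).comp (ContinuousLinearMap.id ℝ (Euc n))) Z := by
    intro Z
    simpa using ((hasFDerivAt_id Z).sub_const Y).norm_sq
  have hu : ∀ Z : Euc n, Z ≠ Y → HasFDerivAt (fun W : Euc n => f (‖W - Y‖ ^ 2))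
      ((f' (‖Z - Y‖ ^ 2)) • (2 • (innerSL ℝ (Z - Y)).comp (ContinuousLinearMap.id ℝ (Euc n)))) Z :=
    fun Z hZ => (hf _ (hqpos Z hZ)).comp_hasFDerivAt Z (hq Z)
  have key : ∀ i : Fin n,
      fderiv ℝ (fun Z => fderiv ℝ (fun W : Euc n => f (‖W - Y‖ ^ 2)) Z
          (EuclideanSpace.single i (1:ℝ))) X (EuclideanSpace.single i (1:ℝ))
        = 4 * (X i - Y i) ^ 2 * f'' (‖X - Y‖ ^ 2) + 2 * f' (‖X - Y‖ ^ 2) := by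
    intro i
    have hmem : ∀ᶠ Z : Euc n in 𝓝 X, Z ≠ Y := isOpen_ne.eventually_mem hXY
    have heq : (fun Z => fderiv ℝ (fun W : Euc n => f (‖W - Y‖ ^ 2)) Z
        (EuclideanSpace.single i (1:ℝ)))
        =ᶠ[𝓝 X] (fun Z => f' (‖Z - Y‖ ^ 2) * (2 * (Z i - Y i))) := by
      filter_upwards [hmem] with Z hZ
      rw [(hu Z hZ).fderiv]
      simp [EuclideanSpace.inner_single_right]
    have h1 : HasFDerivAt (fun Z : Euc n => f' (‖Z - Y‖ ^ 2))
        ((f'' (‖X - Y‖ ^ 2)) • (2 • (innerSL ℝ (X - Y)).comp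
          (ContinuousLinearMap.id ℝ (Euc n)))) X :=
      (hf' _ (hqpos X hXY)).comp_hasFDerivAt X (hq X)
    have h2 : HasFDerivAt (fun Z : Euc n => 2 * (Z i - Y i))
        ((2:ℝ) • (EuclideanSpace.proj i : Euc n →L[ℝ] ℝ)) X :=
      (((EuclideanSpace.proj i : Euc n →L[ℝ] ℝ).hasFDerivAt (x := X)).sub_const
        (Y i)).const_mul (2:ℝ)
    have h3 : HasFDerivAt (fun Z : Euc n => f' (‖Z - Y‖ ^ 2) * (2 * (Z i - Y i))) _ X := h1.mul h2
    rw [heq.fderiv_eq, h3.fderiv]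
    simp [EuclideanSpace.inner_single_right, EuclideanSpace.single_apply]
    ring
  have hsum : ∑ i : Fin n, (X i - Y i) ^ 2 = ‖X - Y‖ ^ 2 := by
    rw [EuclideanSpace.norm_eq, Real.sq_sqrt (by positivity)]
    refine Finset.sum_congr rfl fun i _ => ?_
    simp [Real.norm_eq_abs, sq_abs]
  calc lap (fun Z => f (‖Z - Y‖ ^ 2)) X
      = ∑ i : Fin n, (4 * (X i - Y i) ^ 2 * f'' (‖X - Y‖ ^ 2) + 2 * f' (‖X - Y‖ ^ 2)) :=
        Finset.sum_congr rfl fun i _ => key i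
    _ = 4 * (∑ i : Fin n, (X i - Y i) ^ 2) * f'' (‖X - Y‖ ^ 2)
          + 2 * n * f' (‖X - Y‖ ^ 2) := by
        rw [Finset.sum_add_distrib, Finset.sum_const, ← Finset.sum_mul, ← Finset.mul_sum]
        simp [Finset.card_univ]; ring
    _ = _ := by rw [hsum]

lemma hasDerivAt_rpow_mul_log (e α β : ℝ) {t : ℝ} (ht : 0 < t) :
    HasDerivAt (fun s : ℝ => s ^ e * (α * Real.log s + β))
      (t ^ (e - 1) * (e * (α * Real.log t + β) + α)) t := by
  have h1 : HasDerivAt (fun s : ℝ => s ^ e) (e * t ^ (e - 1)) t :=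
    Real.hasDerivAt_rpow_const (Or.inl ht.ne')
  have h2 : HasDerivAt (fun s : ℝ => α * Real.log s + β) (α * t⁻¹) t :=
    ((Real.hasDerivAt_log ht.ne').const_mul α).add_const β
  have h3 : HasDerivAt (fun s : ℝ => s ^ e * (α * Real.log s + β)) _ t := h1.mul h2
  convert h3 using 1
  rw [Real.rpow_sub ht, Real.rpow_one]
  field_simp

end

/-- For `n ≥ 4` even and `m ≥ n/2`, the logarithmic fundamental
solution satisfies `Δ_X 𝒦_m(X, Y) = 𝒦_{m-1}(X, Y)` for all `X ≠ Y`. -/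
theorem polyK_laplacian_log_range (n : ℕ) (hn : 4 ≤ n) (hne : Even n)
    (m : ℕ) (hm : n / 2 ≤ m) (Y X : Euc n) (hXY : X ≠ Y) :
    lap (fun Z => polyK n m Z Y) X = polyK n (m - 1) X Y := by
  have hnmod : n % 2 = 0 := Nat.even_iff.mp hne
  have hnodd : ¬ Odd n := by simpa [Nat.odd_iff] using hnmod
  set ω := sphereArea n with hω
  set c := polyC n m with hc
  set P := ∏ k ∈ Finset.Icc 1 (n / 2 - 2), gamK n k with hP
  set Q := ∏ t ∈ Finset.Icc 1 (m - n / 2), deltaS n (2 * (t : ℝ)) with hQ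
  set D := (((n : ℝ) - 2) ^ 2 * ω * P * Q) with hD
  set b : ℝ := (m : ℝ) - (n : ℝ) / 2 with hb
  have hrpos : (0 : ℝ) < ‖X - Y‖ := norm_pos_iff.2 (sub_ne_zero.2 hXY)
  have hn4R : (4 : ℝ) ≤ (n : ℝ) := by exact_mod_cast hn
  have hn2R : ((n / 2 : ℕ) : ℝ) = (n : ℝ) / 2 := by
    rw [Nat.cast_div_charZero (by omega : 2 ∣ n)]; norm_num
  -- nonvanishing facts
  have hωpos : 0 < ω := by
    rw [hω, sphereArea]
    have h1 : 0 < Real.Gamma ((n : ℝ) / 2) := Real.Gamma_pos_of_pos (by positivity)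
    positivity
  have hn2ne : ((n : ℝ) - 2) ≠ 0 := by linarith
  have hPne : P ≠ 0 := by
    rw [hP]
    refine Finset.prod_ne_zero_iff.2 fun k hk => ?_
    rw [Finset.mem_Icc] at hk
    have h2 : 2 * k + 4 ≤ n := by omega
    have h2R : 2 * (k : ℝ) + 4 ≤ (n : ℝ) := by exact_mod_cast h2
    have h1 : (1 : ℝ) ≤ (k : ℝ) := by exact_mod_cast hk.1
    rw [gamK, deltaS]
    exact ne_of_lt (mul_neg_of_neg_of_pos (by linarith) (by linarith))
  have hQgen : ∀ N : ℕ, (∏ t ∈ Finset.Icc 1 N, deltaS n (2 * (t : ℝ))) ≠ 0 := by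
    intro N
    refine Finset.prod_ne_zero_iff.2 fun t ht => ?_
    rw [Finset.mem_Icc] at ht
    have h1 : (1 : ℝ) ≤ (t : ℝ) := by exact_mod_cast ht.1
    rw [deltaS]
    exact ne_of_gt (mul_pos (by linarith) (by linarith))
  have hQne : Q ≠ 0 := hQ ▸ hQgen (m - n / 2)
  have hDne : D ≠ 0 := by
    rw [hD]
    exact mul_ne_zero (mul_ne_zero (mul_ne_zero (pow_ne_zero _ hn2ne) hωpos.ne') hPne) hQne
  -- derivatives
  have hf : ∀ t : ℝ, 0 < t → HasDerivAt (fun s : ℝ => s ^ b * ((1/2) * Real.log s + c) / D)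
      (t ^ (b - 1) * ((b/2) * Real.log t + (b * c + 1/2)) / D) t := by
    intro t ht
    have h : HasDerivAt (fun s : ℝ => s ^ b * ((1/2) * Real.log s + c) / D) _ t :=
      (hasDerivAt_rpow_mul_log b (1/2) c ht).div_const D
    convert h using 1
    ring
  have hf' : ∀ t : ℝ, 0 < t →
      HasDerivAt (fun s : ℝ => s ^ (b - 1) * ((b/2) * Real.log s + (b * c + 1/2)) / D)
      (t ^ (b - 1 - 1) * ((b - 1) * (b/2) * Real.log t
        + ((b - 1) * (b * c + 1/2) + b/2)) / D) t := by
    intro t ht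
    have h : HasDerivAt (fun s : ℝ => s ^ (b - 1) * ((b/2) * Real.log s + (b * c + 1/2)) / D) _ t :=
      (hasDerivAt_rpow_mul_log (b - 1) (b/2) (b * c + 1/2) ht).div_const D
    convert h using 1
    ring
  have hlap := lap_radial (fun s : ℝ => s ^ b * ((1/2) * Real.log s + c) / D)
    (fun t : ℝ => t ^ (b - 1) * ((b/2) * Real.log t + (b * c + 1/2)) / D)
    (fun t : ℝ => t ^ (b - 1 - 1) * ((b - 1) * (b/2) * Real.log t
      + ((b - 1) * (b * c + 1/2) + b/2)) / D)
    hf hf' Y X hXY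
  -- the function identity
  have hfun : (fun Z : Euc n => polyK n m Z Y)
      = fun Z : Euc n => (‖Z - Y‖ ^ 2 : ℝ) ^ b * ((1/2) * Real.log (‖Z - Y‖ ^ 2) + c) / D := by
    funext Z
    rw [polyK, if_neg (by omega : ¬ m = 1),
      if_neg (by push_neg; exact ⟨hnodd, by omega⟩)]
    have h0 : (0 : ℝ) ≤ ‖Z - Y‖ := norm_nonneg _
    have e1 : ((‖Z - Y‖ : ℝ) ^ 2) ^ b = ‖Z - Y‖ ^ (2 * (m : ℝ) - (n : ℝ)) := by
      rw [← Real.rpow_natCast ‖Z - Y‖ 2, ← Real.rpow_mul h0]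
      congr 1
      rw [hb]; push_cast; ring
    rw [e1, Real.log_pow, hD, hω, hP, hQ, hc]
    push_cast
    ring
  rw [hfun, hlap]
  -- normalize the left-hand side
  have eA : ((‖X - Y‖ : ℝ) ^ 2) ^ (b - 1 - 1) = ‖X - Y‖ ^ (2 * b - 4) := by
    rw [← Real.rpow_natCast ‖X - Y‖ 2, ← Real.rpow_mul hrpos.le]
    congr 1; push_cast; ring
  have eB : ((‖X - Y‖ : ℝ) ^ 2) ^ (b - 1) = ‖X - Y‖ ^ (2 * b - 2) := by
    rw [← Real.rpow_natCast ‖X - Y‖ 2, ← Real.rpow_mul hrpos.le]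
    congr 1; push_cast; ring
  have eC : (‖X - Y‖ : ℝ) ^ (2 * b - 4) = ‖X - Y‖ ^ (2 * b - 2) / ‖X - Y‖ ^ 2 := by
    rw [eq_div_iff (pow_ne_zero 2 hrpos.ne'), ← Real.rpow_natCast ‖X - Y‖ 2,
      ← Real.rpow_add hrpos]
    congr 1; push_cast; ring
  have eL : Real.log ((‖X - Y‖ : ℝ) ^ 2) = 2 * Real.log ‖X - Y‖ := by
    rw [Real.log_pow]; push_cast; ring
  have hLHS : 4 * ‖X - Y‖ ^ 2 * (((‖X - Y‖ : ℝ) ^ 2) ^ (b - 1 - 1)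
        * ((b - 1) * (b/2) * Real.log (‖X - Y‖ ^ 2)
          + ((b - 1) * (b * c + 1/2) + b/2)) / D)
      + 2 * (n : ℝ) * (((‖X - Y‖ : ℝ) ^ 2) ^ (b - 1)
        * ((b/2) * Real.log (‖X - Y‖ ^ 2) + (b * c + 1/2)) / D)
      = ‖X - Y‖ ^ (2 * b - 2)
        * (deltaS n (2 * b) * (Real.log ‖X - Y‖ + c) + (4 * b + (n : ℝ) - 2)) / D := by
    rw [eA, eB, eL, eC, deltaS]
    field_simp
    ring
  rw [hLHS]
  have heexp : (2 * ((m - 1 : ℕ) : ℝ) - (n : ℝ)) = 2 * b - 2 := by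
    rw [Nat.cast_sub (by omega : 1 ≤ m), hb]; push_cast; ring
  by_cases hcase : m = n / 2
  · -- m = n/2, so b = 0
    have hb0 : b = 0 := by rw [hb, hcase, ← hn2R]; ring
    have hQ1 : Q = 1 := by rw [hQ, show m - n / 2 = 0 from by omega]; simp
    by_cases h4 : n = 4
    · rw [polyK, if_pos (by omega : m - 1 = 1)]
      rw [show (2 : ℝ) - (n : ℝ) = 2 * b - 2 from by rw [hb0]; push_cast [h4]; norm_num]
      have hP1 : P = 1 := by rw [hP, show n / 2 - 2 = 0 from by omega]; simp
      rw [hb0, hD, hQ1, hP1, ← hω]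
      have hdS : deltaS n (2 * (0 : ℝ)) = 0 := by rw [deltaS]; ring
      rw [hdS, show (n : ℝ) = 4 from by exact_mod_cast congrArg (Nat.cast (R := ℝ)) h4]
      norm_num
      field_simp
      ring
    · rw [polyK, if_neg (by omega : ¬ m - 1 = 1),
        if_pos (Or.inr (by omega : 2 * (m - 1) ≤ n - 2))]
      rw [show m - 1 - 1 = n / 2 - 2 from by omega, heexp, ← hP]
      rw [hb0, hD, hQ1, ← hω]
      have hdS : deltaS n (2 * (0 : ℝ)) = 0 := by rw [deltaS]; ring
      rw [hdS]
      field_simp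
      ring
  · -- n/2 < m
    have hmgt : n / 2 < m := lt_of_le_of_ne hm (Ne.symm hcase)
    rw [polyK, if_neg (by omega : ¬ m - 1 = 1),
      if_neg (by push_neg; exact ⟨hnodd, by omega⟩)]
    rw [heexp, ← hP]
    have hT : ((m - n / 2 : ℕ) : ℝ) = b := by
      rw [Nat.cast_sub hm, hn2R, hb]
    have hTop : (((m - 1 - n / 2) + 1 : ℕ) : ℝ) = b := by
      rw [← hT]; congr 1; omega
    have hQsplit : Q = (∏ t ∈ Finset.Icc 1 (m - 1 - n / 2), deltaS n (2 * (t : ℝ)))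
        * deltaS n (2 * b) := by
      rw [hQ, show m - n / 2 = (m - 1 - n / 2) + 1 from by omega,
        Finset.prod_Icc_succ_top (by omega), hTop]
    have hcrel : polyC n (m - 1) = c + (1 / (2 * b) + 1 / (2 * b + (n : ℝ) - 2)) := by
      rw [hc, polyC, polyC, show m - n / 2 = (m - 1 - n / 2) + 1 from by omega,
        Finset.sum_Icc_succ_top (by omega), hTop]
      ring
    have hb1 : (1 : ℝ) ≤ b := by
      rw [← hT]; exact_mod_cast (by omega : 1 ≤ m - n / 2)
    have hQ'ne := hQgen (m - 1 - n / 2)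
    rw [hcrel, hD, hQsplit, deltaS, ← mul_assoc]
    have h2b : (0:ℝ) < 2 * b := by linarith
    have h2bn : (0:ℝ) < 2 * b + (n:ℝ) - 2 := by linarith
    have hne1 : (2 * b : ℝ) ≠ 0 := h2b.ne'
    have hne2 : (2 * b + (n:ℝ) - 2) ≠ 0 := h2bn.ne'
    have hnum : ‖X - Y‖ ^ (2 * b - 2)
          * (2 * b * (2 * b + (n:ℝ) - 2) * (Real.log ‖X - Y‖ + c) + (4 * b + (n:ℝ) - 2))
        = (‖X - Y‖ ^ (2 * b - 2)
            * (Real.log ‖X - Y‖ + (c + (1 / (2 * b) + 1 / (2 * b + (n:ℝ) - 2)))))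
          * (2 * b * (2 * b + (n:ℝ) - 2)) := by
      have key : (2 * b * (2 * b + (n:ℝ) - 2)) * (1 / (2 * b) + 1 / (2 * b + (n:ℝ) - 2))
          = 4 * b + (n:ℝ) - 2 := by
        field_simp
        ring
      linear_combination (-(‖X - Y‖ ^ (2 * b - 2))) * key
    rw [hnum, mul_div_mul_right _ _ (mul_ne_zero hne1 hne2)]
end

section
/- Let n ≥ 3, let D ⊂ ℝ^n be a bounded Lipschitz domain, let j ≥ 1 and 1 ≤ p ≤ ∞. There exists a constant C, depending only on j, n, p and D, such that for every f ∈ L^p(∂D, σ), ‖𝓜_j f‖_{L^p(D)} ≤ C·‖f‖_{L^p(∂D,σ)}, where the L^p(D) norm is taken with respect to Lebesgue measure on D. -/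
open MeasureTheory Filter Metric Set Topology
open scoped ENNReal NNReal RealInnerProductSpace

set_option maxHeartbeats 1000000

noncomputable section AuxiliaryLemmasForMlp

lemma aux_dist_chartFst {k : ℕ} (y z : WithLp 2 (Euc k × ℝ)) :
    dist (chartFst y) (chartFst z) ≤ dist y z := by
  rw [WithLp.prod_dist_eq_of_L2]
  have h1 : dist (chartFst y) (chartFst z) = dist y.fst z.fst := rfl
  rw [h1]
  have h2 : dist y.fst z.fst = Real.sqrt (dist y.fst z.fst ^ 2) := by
    rw [Real.sqrt_sq dist_nonneg]
  nth_rewrite 1 [h2]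
  apply Real.sqrt_le_sqrt
  nlinarith [sq_nonneg (dist y.snd z.snd), dist_nonneg (x := y.snd) (y := z.snd)]

lemma aux_pair_eq {k : ℕ} (y : WithLp 2 (Euc k × ℝ)) :
    (WithLp.equiv 2 (Euc k × ℝ)).symm (chartFst y, chartSnd y) = y := by
  have : (chartFst y, chartSnd y) = (WithLp.equiv 2 (Euc k × ℝ)) y := rfl
  rw [this, Equiv.symm_apply_apply]

lemma aux_graphMap_lipschitz {k : ℕ} {E : Type*} [NormedAddCommGroup E]
    [InnerProductSpace ℝ E] {L : ℝ≥0} {φ : Euc k → ℝ} (hφ : LipschitzWith L φ)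
    (A : E ≃ᵃⁱ[ℝ] WithLp 2 (Euc k × ℝ)) :
    LipschitzWith (1 + L)
      (fun x : Euc k => A.symm ((WithLp.equiv 2 (Euc k × ℝ)).symm (x, φ x))) := by
  apply LipschitzWith.of_dist_le_mul
  intro x y
  have h0 : dist (A.symm ((WithLp.equiv 2 (Euc k × ℝ)).symm (x, φ x)))
      (A.symm ((WithLp.equiv 2 (Euc k × ℝ)).symm (y, φ y)))
      = dist ((WithLp.equiv 2 (Euc k × ℝ)).symm (x, φ x))
        ((WithLp.equiv 2 (Euc k × ℝ)).symm (y, φ y)) := A.symm.dist_map _ _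
  rw [h0, WithLp.prod_dist_eq_of_L2]
  have hxy : dist ((WithLp.equiv 2 (Euc k × ℝ)).symm (x, φ x)).fst
      ((WithLp.equiv 2 (Euc k × ℝ)).symm (y, φ y)).fst = dist x y := rfl
  have hxy2 : dist ((WithLp.equiv 2 (Euc k × ℝ)).symm (x, φ x)).snd
      ((WithLp.equiv 2 (Euc k × ℝ)).symm (y, φ y)).snd = dist (φ x) (φ y) := rfl
  rw [hxy, hxy2]
  have h1 : dist (φ x) (φ y) ≤ (L : ℝ) * dist x y := hφ.dist_le_mul x y
  have h2 : Real.sqrt (dist x y ^ 2 + dist (φ x) (φ y) ^ 2)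
      ≤ dist x y + dist (φ x) (φ y) := by
    rw [show dist x y + dist (φ x) (φ y)
        = Real.sqrt ((dist x y + dist (φ x) (φ y)) ^ 2) from
      (Real.sqrt_sq (by positivity)).symm]
    apply Real.sqrt_le_sqrt
    nlinarith [dist_nonneg (x := x) (y := y), dist_nonneg (x := φ x) (y := φ y)]
  calc Real.sqrt (dist x y ^ 2 + dist (φ x) (φ y) ^ 2)
      ≤ dist x y + dist (φ x) (φ y) := h2
    _ ≤ dist x y + (L : ℝ) * dist x y := by linarith
    _ = ((1 + L : ℝ≥0) : ℝ) * dist x y := by push_cast; ring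

lemma aux_symm_lipschitz (k : ℕ) :
    LipschitzWith ((k : ℝ≥0) ^ ((1 : ℝ≥0∞)/2).toReal)
      (⇑(WithLp.equiv 2 ((_ : Fin k) → ℝ)).symm : (Fin k → ℝ) → Euc k) := by
  have h := PiLp.antilipschitzWith_ofLp 2 (fun _ : Fin k => ℝ)
  apply LipschitzWith.of_dist_le_mul
  intro x y
  have := h.le_mul_dist ((WithLp.equiv 2 _).symm x) ((WithLp.equiv 2 _).symm y)
  simpa [Fintype.card_fin] using this

lemma aux_hausdorff_ball (k : ℕ) (hk : 0 < k) (c : Euc k) (r : ℝ) (hr : 0 < r) :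
    μH[(k : ℝ)] (ball c r) ≤
      (((k : ℝ≥0) ^ ((1 : ℝ≥0∞)/2).toReal : ℝ≥0) : ℝ≥0∞) ^ (k : ℝ) *
        ENNReal.ofReal ((2 * r) ^ k) := by
  set K0 : ℝ≥0 := (k : ℝ≥0) ^ ((1 : ℝ≥0∞)/2).toReal with hK0
  set e := WithLp.equiv 2 ((_ : Fin k) → ℝ)
  have hsub : ball c r = ⇑e.symm '' (⇑e '' ball c r) := by
    rw [Equiv.symm_image_image]
  rw [hsub]
  have h1 : μH[(k:ℝ)] (⇑e.symm '' (⇑e '' ball c r)) ≤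
      (K0 : ℝ≥0∞) ^ (k : ℝ) * μH[(k:ℝ)] (⇑e '' ball c r) :=
    (aux_symm_lipschitz k).hausdorffMeasure_image_le (by positivity) _
  refine h1.trans ?_
  gcongr
  have h2 : ⇑e '' ball c r ⊆ ball (e c) r := by
    rintro y ⟨x, hx, rfl⟩
    have := (PiLp.lipschitzWith_ofLp 2 (fun _ : Fin k => ℝ)).dist_le_mul x c
    simp only [NNReal.coe_one, one_mul] at this
    exact lt_of_le_of_lt this (by simpa [dist_comm] using hx)
  have h3 : μH[(k:ℝ)] (⇑e '' ball c r) ≤ μH[(k:ℝ)] (ball (e c) r) := measure_mono h2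
  refine h3.trans ?_
  have h4 : (μH[(k:ℝ)] : Measure (Fin k → ℝ)) = volume := by
    have := MeasureTheory.hausdorffMeasure_pi_real (ι := Fin k)
    simpa [Fintype.card_fin] using this
  rw [h4, Real.volume_pi_ball _ hr, Fintype.card_fin]

/-- Ahlfors upper-regularity constant coming from one chart. -/
def ahlC (n : ℕ) (L : ℝ) : ℝ≥0∞ :=
  ((1 + Real.toNNReal L : ℝ≥0) : ℝ≥0∞) ^ ((n : ℝ) - 1) *
    ((((n - 1 : ℕ) : ℝ≥0) ^ ((1 : ℝ≥0∞)/2).toReal : ℝ≥0) : ℝ≥0∞) ^ (((n-1 : ℕ)) : ℝ) *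
      ENNReal.ofReal ((2 : ℝ) ^ (n - 1 : ℕ))

lemma ahlC_ne_top (n : ℕ) (hn : 3 ≤ n) (L : ℝ) : ahlC n L ≠ ∞ := by
  unfold ahlC
  have h1 : (3:ℝ) ≤ (n:ℝ) := by exact_mod_cast hn
  apply ENNReal.mul_ne_top
  apply ENNReal.mul_ne_top
  · exact ENNReal.rpow_ne_top_of_nonneg (by linarith) ENNReal.coe_ne_top
  · exact ENNReal.rpow_ne_top_of_nonneg (by positivity) ENNReal.coe_ne_top
  · exact ENNReal.ofReal_ne_top

lemma aux_chart_bound (n : ℕ) (hn : 3 ≤ n) (L : ℝ) (D : Set (Euc n)) (U : Set (Euc n))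
    (A : Euc n ≃ᵃⁱ[ℝ] WithLp 2 (Euc (n - 1) × ℝ)) (φ : Euc (n - 1) → ℝ)
    (hφ : LipschitzWith (Real.toNNReal L) φ)
    (hfr : ∀ X ∈ U, (X ∈ frontier D ↔ chartSnd (A X) = φ (chartFst (A X))))
    (x : Euc n) (r : ℝ) (hr : 0 < r) :
    μH[(n : ℝ) - 1] (frontier D ∩ U ∩ ball x r) ≤
      ahlC n L * ENNReal.ofReal (r ^ ((n : ℝ) - 1)) := by
  have hcast : (((n - 1 : ℕ)) : ℝ) = (n : ℝ) - 1 := by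
    have : (1:ℕ) ≤ n := by omega
    push_cast [Nat.cast_sub this]
    ring
  have hd0 : (0:ℝ) ≤ (n : ℝ) - 1 := by
    have : (3:ℝ) ≤ (n:ℝ) := by exact_mod_cast hn
    linarith
  set G := fun x' : Euc (n-1) => A.symm ((WithLp.equiv 2 (Euc (n-1) × ℝ)).symm (x', φ x'))
    with hGdef
  have hG : LipschitzWith (1 + Real.toNNReal L) G := aux_graphMap_lipschitz hφ A
  have hsub : frontier D ∩ U ∩ ball x r ⊆ G '' ball (chartFst (A x)) r := by
    rintro X ⟨⟨hXf, hXU⟩, hXb⟩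
    refine ⟨chartFst (A X), ?_, ?_⟩
    · rw [mem_ball]
      calc dist (chartFst (A X)) (chartFst (A x)) ≤ dist (A X) (A x) :=
            aux_dist_chartFst _ _
        _ = dist X x := A.dist_map X x
        _ < r := hXb
    · have hφX : chartSnd (A X) = φ (chartFst (A X)) := (hfr X hXU).mp hXf
      show A.symm ((WithLp.equiv 2 (Euc (n-1) × ℝ)).symm (chartFst (A X), φ (chartFst (A X)))) = X
      rw [← hφX, aux_pair_eq]
      exact A.symm_apply_apply X
  calc μH[(n:ℝ)-1] (frontier D ∩ U ∩ ball x r)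
      ≤ μH[(n:ℝ)-1] (G '' ball (chartFst (A x)) r) := measure_mono hsub
    _ ≤ ((1 + Real.toNNReal L : ℝ≥0) : ℝ≥0∞) ^ ((n:ℝ)-1) *
          μH[(n:ℝ)-1] (ball (chartFst (A x)) r) :=
        hG.hausdorffMeasure_image_le hd0 _
    _ ≤ ((1 + Real.toNNReal L : ℝ≥0) : ℝ≥0∞) ^ ((n:ℝ)-1) *
          (((((n-1 : ℕ) : ℝ≥0) ^ ((1 : ℝ≥0∞)/2).toReal : ℝ≥0) : ℝ≥0∞) ^ ((n:ℝ) - 1) *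
            ENNReal.ofReal ((2 * r) ^ (n-1 : ℕ))) := by
        gcongr
        have := aux_hausdorff_ball (n-1) (by omega) (chartFst (A x)) r hr
        rw [hcast] at this
        exact this
    _ = ahlC n L * ENNReal.ofReal (r ^ ((n:ℝ)-1)) := by
        rw [ahlC, hcast, mul_assoc, mul_assoc]
        congr 2
        rw [← ENNReal.ofReal_mul (by positivity), mul_pow]
        congr 1
        rw [← Real.rpow_natCast r (n-1), hcast]

lemma aux_ahlfors (n : ℕ) (hn : 3 ≤ n) (L : ℝ) (D : Set (Euc n))
    (hD : IsBddLipschitzDomain n L D) :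
    ∃ C : ℝ≥0∞, C ≠ ∞ ∧ surfMeasure n D univ ≠ ∞ ∧
      ∀ x r, 0 < r → surfMeasure n D (ball x r) ≤ C * ENNReal.ofReal (r ^ ((n:ℝ) - 1)) := by
  obtain ⟨hDo, hDb, hDc, hFc, hch⟩ := hD
  have hd0 : (0:ℝ) ≤ (n:ℝ) - 1 := by
    have : (3:ℝ) ≤ (n:ℝ) := by exact_mod_cast hn
    linarith
  have hFcl : IsClosed (frontier D) := isClosed_frontier
  have hFb : Bornology.IsBounded (frontier D) :=
    hDb.closure.subset frontier_subset_closure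
  have hFcomp : IsCompact (frontier D) :=
    Metric.isCompact_of_isClosed_isBounded hFcl hFb
  have hσ : ∀ s : Set (Euc n), MeasurableSet s →
      surfMeasure n D s = μH[(n:ℝ)-1] (s ∩ frontier D) := by
    intro s hs
    exact Measure.restrict_apply hs
  have hch' : ∀ P : frontier D, ∃ U A φ,
      LipschitzWith (Real.toNNReal L) φ ∧ IsGraphChartAt n D P U A φ :=
    fun P => hch P P.2
  choose U Af φf hLip hchart using hch'
  have hcover : frontier D ⊆ ⋃ P : frontier D, U P :=
    fun P hP => mem_iUnion.mpr ⟨⟨P, hP⟩, (hchart ⟨P, hP⟩).2.1⟩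
  obtain ⟨δ, hδ, hleb⟩ :=
    lebesgue_number_lemma_of_metric hFcomp (fun P => (hchart P).1) hcover
  -- small radii
  have hsmall : ∀ x : Euc n, ∀ r : ℝ, 0 < r → r ≤ δ/2 →
      surfMeasure n D (ball x r) ≤ ahlC n L * ENNReal.ofReal (r ^ ((n:ℝ)-1)) := by
    intro x r hr hrδ
    rw [hσ _ measurableSet_ball]
    by_cases hne : (ball x r ∩ frontier D).Nonempty
    · obtain ⟨P, hPb, hPf⟩ := hne
      obtain ⟨i, hi⟩ := hleb P hPf
      have hsub2 : ball x r ∩ frontier D ⊆ frontier D ∩ U i ∩ ball x r := by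
        rintro y ⟨hyb, hyf⟩
        refine ⟨⟨hyf, ?_⟩, hyb⟩
        apply hi
        rw [mem_ball]
        calc dist y P ≤ dist y x + dist x P := dist_triangle _ _ _
          _ < r + r := by
              apply add_lt_add (mem_ball.mp hyb)
              rw [dist_comm]; exact mem_ball.mp hPb
          _ ≤ δ := by linarith
      exact (measure_mono hsub2).trans
        (aux_chart_bound n hn L D (U i) (Af i) (φf i) (hLip i) ((hchart i).2.2.2) x r hr)
    · rw [not_nonempty_iff_eq_empty] at hne
      simp [hne]
  -- finiteness
  have hfin : surfMeasure n D univ ≠ ∞ := by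
    have hcov2 : frontier D ⊆ ⋃ P ∈ frontier D, ball P (δ/2) :=
      fun P hP => mem_biUnion hP (mem_ball_self (by linarith))
    obtain ⟨t, hts, htfin, htcov⟩ := hFcomp.elim_finite_subcover_image
      (fun P _ => isOpen_ball) hcov2
    have h1 : surfMeasure n D univ = μH[(n:ℝ)-1] (frontier D) := by
      rw [hσ _ MeasurableSet.univ, univ_inter]
    rw [h1]
    haveI : Fintype t := htfin.fintype
    have h2 : μH[(n:ℝ)-1] (frontier D) ≤ ∑' P : t, μH[(n:ℝ)-1] (ball (P:Euc n) (δ/2) ∩ frontier D) := by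
      have : frontier D ⊆ ⋃ P : t, (ball (P : Euc n) (δ/2) ∩ frontier D) := by
        intro P hP
        obtain ⟨Q, hQt, hQb⟩ := mem_iUnion₂.mp (htcov hP)
        exact mem_iUnion.mpr ⟨⟨Q, hQt⟩, hQb, hP⟩
      exact (measure_mono this).trans (measure_iUnion_le _)
    refine (lt_of_le_of_lt h2 ?_).ne
    rw [tsum_fintype]
    refine ENNReal.sum_lt_top.mpr (fun P _ => ?_)
    have : μH[(n:ℝ)-1] (ball (P:Euc n) (δ/2) ∩ frontier D) = surfMeasure n D (ball (P:Euc n) (δ/2)) :=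
      (hσ _ measurableSet_ball).symm
    rw [this]
    refine lt_of_le_of_lt (hsmall _ (δ/2) (by linarith) le_rfl) ?_
    exact ENNReal.mul_lt_top (ahlC_ne_top n hn L).lt_top ENNReal.ofReal_lt_top
  -- assemble the constant
  set S := surfMeasure n D univ with hS
  set c0 := ENNReal.ofReal ((δ/2) ^ ((n:ℝ)-1)) with hc0
  have hc0pos : c0 ≠ 0 := by
    rw [hc0]
    simp only [ne_eq, ENNReal.ofReal_eq_zero, not_le]
    positivity
  have hc0top : c0 ≠ ∞ := ENNReal.ofReal_ne_top
  refine ⟨ahlC n L + S * c0⁻¹, ?_, hfin, ?_⟩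
  · exact ENNReal.add_ne_top.mpr ⟨ahlC_ne_top n hn L,
      ENNReal.mul_ne_top hfin (ENNReal.inv_ne_top.mpr hc0pos)⟩
  · intro x r hr
    rcases le_or_gt r (δ/2) with hle | hgt
    · refine (hsmall x r hr hle).trans ?_
      gcongr
      exact le_self_add
    · have h3 : surfMeasure n D (ball x r) ≤ S := measure_mono (subset_univ _)
      have h4 : c0 ≤ ENNReal.ofReal (r ^ ((n:ℝ)-1)) := by
        rw [hc0]
        apply ENNReal.ofReal_le_ofReal
        apply Real.rpow_le_rpow (by linarith) (by linarith) hd0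
      calc surfMeasure n D (ball x r) ≤ S := h3
        _ = S * (c0⁻¹ * c0) := by rw [ENNReal.inv_mul_cancel hc0pos hc0top, mul_one]
        _ = S * c0⁻¹ * c0 := by ring
        _ ≤ S * c0⁻¹ * ENNReal.ofReal (r ^ ((n:ℝ)-1)) := by gcongr
        _ ≤ (ahlC n L + S * c0⁻¹) * ENNReal.ofReal (r ^ ((n:ℝ)-1)) := by
            gcongr
            exact le_add_self

lemma aux_dyadic (n : ℕ) (μ : Measure (Euc n)) {R a d : ℝ} (hR : 1 ≤ R) (ha : a < 0)
    (had : 0 < a + d) {Cb : ℝ≥0∞} (hCb : Cb ≠ ∞)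
    (hball : ∀ (X : Euc n) (r : ℝ), 0 < r → μ (ball X r) ≤ Cb * ENNReal.ofReal (r ^ d)) :
    ∃ S : ℝ≥0∞, S ≠ ∞ ∧ ∀ X : Euc n, (∀ᵐ Q ∂μ, dist X Q ≤ R) →
      ∫⁻ Q, ENNReal.ofReal (dist X Q ^ a) ∂μ ≤ S := by
  have h2 : (0:ℝ) < 2 := two_pos
  have hRpos : (0:ℝ) < R := lt_of_lt_of_le one_pos hR
  set q : ℝ := (2:ℝ) ^ (-(a+d)) with hq
  have hq0 : 0 < q := Real.rpow_pos_of_pos h2 _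
  have hq1 : q < 1 := Real.rpow_lt_one_of_one_lt_of_neg one_lt_two (by linarith)
  set b : ℝ := R ^ (a+d) * 2 ^ (d - a) with hb
  have hb0 : 0 < b := mul_pos (Real.rpow_pos_of_pos hRpos _) (Real.rpow_pos_of_pos h2 _)
  have hq1' : ENNReal.ofReal q < 1 := by
    rw [← ENNReal.ofReal_one]
    exact ENNReal.ofReal_lt_ofReal_iff_of_nonneg hq0.le |>.mpr hq1
  refine ⟨Cb * ENNReal.ofReal b * (1 - ENNReal.ofReal q)⁻¹, ?_, ?_⟩
  · apply ENNReal.mul_ne_top (ENNReal.mul_ne_top hCb ENNReal.ofReal_ne_top)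
    rw [ENNReal.inv_ne_top]
    simp only [ne_eq, tsub_eq_zero_iff_le, not_le]
    exact hq1'
  intro X hsupp
  -- the key real computation
  have key : ∀ k : ℕ, (R / 2^(k+1)) ^ a * (2 * (R / 2^k)) ^ d = b * q ^ k := by
    intro k
    have e1 : (R / 2^(k+1) : ℝ) = R * 2 ^ (-((k:ℝ)+1)) := by
      rw [Real.rpow_neg h2.le, ← Real.rpow_natCast 2 (k+1)]
      push_cast
      rw [div_eq_mul_inv]
    have e2 : (2 * (R / 2^k) : ℝ) = R * 2 ^ (1-(k:ℝ)) := by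
      rw [Real.rpow_sub h2, Real.rpow_one, ← Real.rpow_natCast 2 k]
      field_simp
    have e3 : q ^ k = (2:ℝ) ^ (-(a+d) * (k:ℝ)) := by
      rw [hq, Real.rpow_mul h2.le, Real.rpow_natCast]
    rw [e1, e2, e3, Real.mul_rpow hRpos.le (Real.rpow_nonneg h2.le _),
      Real.mul_rpow hRpos.le (Real.rpow_nonneg h2.le _)]
    rw [← Real.rpow_mul h2.le, ← Real.rpow_mul h2.le]
    rw [show R ^ a * 2 ^ ((-((k:ℝ)+1)) * a) * (R ^ d * 2 ^ ((1-(k:ℝ)) * d))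
        = (R ^ a * R ^ d) * (2 ^ ((-((k:ℝ)+1)) * a) * 2 ^ ((1-(k:ℝ)) * d)) from by ring]
    rw [← Real.rpow_add hRpos, ← Real.rpow_add h2, hb]
    rw [show R ^ (a+d) * 2 ^ (d-a) * 2 ^ (-(a+d) * (k:ℝ))
        = R ^ (a+d) * (2 ^ (d-a) * 2 ^ (-(a+d) * (k:ℝ))) from by ring, ← Real.rpow_add h2]
    congr 1
    ring
  -- pointwise domination
  have hpt : ∀ Q : Euc n, dist X Q ≤ R → ENNReal.ofReal (dist X Q ^ a) ≤
      ∑' k : ℕ, (ball X (2*(R/2^k))).indicator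
        (fun _ => ENNReal.ofReal ((R/2^(k+1)) ^ a)) Q := by
    intro Q hQ
    rcases eq_or_lt_of_le (dist_nonneg (x := X) (y := Q)) with h0 | h0
    · rw [← h0, Real.zero_rpow ha.ne, ENNReal.ofReal_zero]
      exact zero_le
    · set t := dist X Q with ht
      have hex : ∃ m : ℕ, R / 2^(m+1) < t := by
        obtain ⟨m, hm⟩ := pow_unbounded_of_one_lt (R / t) one_lt_two
        refine ⟨m, ?_⟩
        rw [div_lt_iff₀ (by positivity)]
        rw [div_lt_iff₀ h0] at hm
        calc R < 2 ^ m * t := hm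
          _ ≤ 2 ^ (m+1) * t := by
              have : (2:ℝ) ^ m ≤ 2 ^ (m+1) := by
                apply pow_le_pow_right₀ (by norm_num) (by omega)
              nlinarith
          _ = t * 2 ^ (m+1) := by ring
      set k := Nat.find hex with hk
      have hk1 : R / 2^(k+1) < t := Nat.find_spec hex
      have hk2 : t ≤ R / 2^k := by
        rcases Nat.eq_zero_or_pos k with hk0 | hk0
        · rw [hk0]; simpa using hQ
        · have hmin := Nat.find_min hex (m := k-1) (by omega)
          rw [not_lt] at hmin
          have : k - 1 + 1 = k := by omega
          rwa [this] at hmin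
      refine le_trans ?_ (ENNReal.le_tsum k)
      rw [indicator_of_mem]
      · exact ENNReal.ofReal_le_ofReal
          (Real.rpow_le_rpow_of_nonpos (by positivity) hk1.le ha.le)
      · rw [mem_ball, dist_comm]
        have hpos : (0:ℝ) < R / 2^k := by positivity
        calc dist X Q ≤ R / 2^k := hk2
          _ < 2 * (R / 2^k) := by linarith
  calc ∫⁻ Q, ENNReal.ofReal (dist X Q ^ a) ∂μ
      ≤ ∫⁻ Q, ∑' k : ℕ, (ball X (2*(R/2^k))).indicator
          (fun _ => ENNReal.ofReal ((R/2^(k+1)) ^ a)) Q ∂μ :=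
        lintegral_mono_ae (hsupp.mono hpt)
    _ = ∑' k : ℕ, ∫⁻ Q, (ball X (2*(R/2^k))).indicator
          (fun _ => ENNReal.ofReal ((R/2^(k+1)) ^ a)) Q ∂μ :=
        lintegral_tsum (fun k =>
          ((measurable_const.indicator measurableSet_ball).aemeasurable))
    _ = ∑' k : ℕ, ENNReal.ofReal ((R/2^(k+1)) ^ a) * μ (ball X (2*(R/2^k))) := by
        congr 1; funext k
        rw [lintegral_indicator_const measurableSet_ball]
    _ ≤ ∑' k : ℕ, ENNReal.ofReal ((R/2^(k+1)) ^ a) * (Cb * ENNReal.ofReal ((2*(R/2^k)) ^ d)) := by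
        apply ENNReal.tsum_le_tsum
        intro k
        gcongr
        exact hball X _ (by positivity)
    _ = ∑' k : ℕ, Cb * ENNReal.ofReal b * (ENNReal.ofReal q) ^ k := by
        congr 1; funext k
        rw [show ENNReal.ofReal ((R/2^(k+1)) ^ a) * (Cb * ENNReal.ofReal ((2*(R/2^k)) ^ d))
            = Cb * (ENNReal.ofReal ((R/2^(k+1)) ^ a) * ENNReal.ofReal ((2*(R/2^k)) ^ d)) from by ring]
        rw [← ENNReal.ofReal_mul (Real.rpow_nonneg (by positivity) _), key k,
          ENNReal.ofReal_mul hb0.le, ENNReal.ofReal_pow hq0.le]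
        ring
    _ = Cb * ENNReal.ofReal b * (1 - ENNReal.ofReal q)⁻¹ := by
        rw [ENNReal.tsum_mul_left, ENNReal.tsum_geometric]

lemma aux_polyK_bound (n j : ℕ) (hn : 3 ≤ n) (hj : 1 ≤ j) (R : ℝ) (hR : 1 ≤ R) :
    ∃ CK : ℝ, 0 ≤ CK ∧ ∀ X Q : Euc n, X ≠ Q → dist X Q ≤ R →
      |polyK n j X Q| ≤ CK * dist X Q ^ (2 - (n:ℝ)) := by
  have hj1 : (1:ℝ) ≤ (j:ℝ) := by exact_mod_cast hj
  by_cases h1 : j = 1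
  · refine ⟨|((n : ℝ) - 2) * sphereArea n|⁻¹, by positivity, ?_⟩
    intro X Q hXQ htR
    have ht0 : 0 < dist X Q := dist_pos.mpr hXQ
    rw [polyK, if_pos h1, dist_eq_norm] at *
    rw [abs_div, abs_of_nonneg (Real.rpow_nonneg (norm_nonneg _) _), div_eq_mul_inv]
    rw [mul_comm]
  · by_cases h2 : Odd n ∨ 2 * j ≤ n - 2
    · refine ⟨R ^ (2*(j:ℝ)-2) *
        |((n : ℝ) - 2) * sphereArea n * ∏ k ∈ Finset.Icc 1 (j - 1), gamK n k|⁻¹, by positivity, ?_⟩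
      intro X Q hXQ htR
      have ht0 : 0 < dist X Q := dist_pos.mpr hXQ
      rw [dist_eq_norm] at ht0 htR ⊢
      set t := ‖X - Q‖ with htdef
      rw [polyK, if_neg h1, if_pos h2]
      rw [abs_div, abs_of_nonneg (Real.rpow_nonneg (norm_nonneg _) _), div_eq_mul_inv]
      rw [show (2*(j:ℝ)-(n:ℝ)) = (2-(n:ℝ)) + (2*(j:ℝ)-2) from by ring, Real.rpow_add ht0]
      have ht2 : t ^ (2*(j:ℝ)-2) ≤ R ^ (2*(j:ℝ)-2) :=
        Real.rpow_le_rpow ht0.le htR (by linarith)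
      calc t ^ (2-(n:ℝ)) * t ^ (2*(j:ℝ)-2) * |_|⁻¹
          ≤ t ^ (2-(n:ℝ)) * R ^ (2*(j:ℝ)-2) * |_|⁻¹ := by gcongr
        _ = R ^ (2*(j:ℝ)-2) * |_|⁻¹ * t ^ (2-(n:ℝ)) := by ring
    · -- log branch
      have hj2 : 2 ≤ j := by
        rw [not_or] at h2
        have hev : Even n := Nat.not_odd_iff_even.mp h2.1
        obtain ⟨m, hm⟩ := hev
        omega
      set c := polyC n j with hc
      set d3 := (((n : ℝ) - 2) ^ 2 * sphereArea n * (∏ k ∈ Finset.Icc 1 (n / 2 - 2), gamK n k) *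
        ∏ t ∈ Finset.Icc 1 (j - n / 2), deltaS n (2 * (t : ℝ))) with hd3
      refine ⟨(R ^ (2*(j:ℝ)-1) + R ^ (2*(j:ℝ)-2) * |c|) * |d3|⁻¹, by positivity, ?_⟩
      intro X Q hXQ htR
      have ht0 : 0 < dist X Q := dist_pos.mpr hXQ
      rw [dist_eq_norm] at ht0 htR ⊢
      set t := ‖X - Q‖ with htdef
      have hR2j1 : (1:ℝ) ≤ R ^ (2*(j:ℝ)-1) := by
        calc (1:ℝ) = R ^ (0:ℝ) := (Real.rpow_zero R).symm
          _ ≤ R ^ (2*(j:ℝ)-1) := Real.rpow_le_rpow_of_exponent_le hR (by linarith)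
      have hlog : t ^ (2*(j:ℝ)-2) * |Real.log t| ≤ R ^ (2*(j:ℝ)-1) := by
        rcases le_or_gt t 1 with hle | hgt
        · have habs : |Real.log t| = -Real.log t :=
            abs_of_nonpos (Real.log_nonpos ht0.le hle)
          have hlog2 : -Real.log t ≤ t⁻¹ := by
            rw [← Real.log_inv]
            have := Real.log_le_sub_one_of_pos (inv_pos.mpr ht0)
            linarith
          rw [habs]
          calc t ^ (2*(j:ℝ)-2) * (-Real.log t) ≤ t ^ (2*(j:ℝ)-2) * t⁻¹ := by
                apply mul_le_mul_of_nonneg_left hlog2 (Real.rpow_nonneg ht0.le _)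
            _ = t ^ (2*(j:ℝ)-3) := by
                rw [← Real.rpow_neg_one t, ← Real.rpow_add ht0]
                congr 1; ring
            _ ≤ 1 := Real.rpow_le_one ht0.le hle (by
                have : (2:ℝ) ≤ (j:ℝ) := by exact_mod_cast hj2
                linarith)
            _ ≤ R ^ (2*(j:ℝ)-1) := hR2j1
        · have habs : |Real.log t| = Real.log t :=
            abs_of_nonneg (Real.log_nonneg hgt.le)
          have hlog2 : Real.log t ≤ t := by
            have := Real.log_le_sub_one_of_pos ht0
            linarith
          rw [habs]
          calc t ^ (2*(j:ℝ)-2) * Real.log t ≤ t ^ (2*(j:ℝ)-2) * t := by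
                apply mul_le_mul_of_nonneg_left hlog2 (Real.rpow_nonneg ht0.le _)
            _ = t ^ (2*(j:ℝ)-1) := by
                nth_rewrite 2 [← Real.rpow_one t]
                rw [← Real.rpow_add ht0]
                congr 1; ring
            _ ≤ R ^ (2*(j:ℝ)-1) := Real.rpow_le_rpow ht0.le htR (by linarith)
      have hcterm : t ^ (2*(j:ℝ)-2) * |c| ≤ R ^ (2*(j:ℝ)-2) * |c| := by
        apply mul_le_mul_of_nonneg_right _ (abs_nonneg _)
        exact Real.rpow_le_rpow ht0.le htR (by linarith)
      rw [polyK, if_neg h1, if_neg h2, ← hc, ← hd3]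
      rw [abs_div, div_eq_mul_inv, abs_mul,
        abs_of_nonneg (Real.rpow_nonneg (norm_nonneg _) _)]
      rw [show (2*(j:ℝ)-(n:ℝ)) = (2-(n:ℝ)) + (2*(j:ℝ)-2) from by ring, Real.rpow_add ht0]
      have hmain : t ^ (2*(j:ℝ)-2) * |Real.log t + c| ≤
          R ^ (2*(j:ℝ)-1) + R ^ (2*(j:ℝ)-2) * |c| := by
        calc t ^ (2*(j:ℝ)-2) * |Real.log t + c|
            ≤ t ^ (2*(j:ℝ)-2) * (|Real.log t| + |c|) := by
              apply mul_le_mul_of_nonneg_left (abs_add_le _ _) (Real.rpow_nonneg ht0.le _)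
          _ = t ^ (2*(j:ℝ)-2) * |Real.log t| + t ^ (2*(j:ℝ)-2) * |c| := by ring
          _ ≤ R ^ (2*(j:ℝ)-1) + R ^ (2*(j:ℝ)-2) * |c| := add_le_add hlog hcterm
      calc t ^ (2-(n:ℝ)) * t ^ (2*(j:ℝ)-2) * |Real.log t + c| * |d3|⁻¹
          = (t ^ (2*(j:ℝ)-2) * |Real.log t + c|) * |d3|⁻¹ * t ^ (2-(n:ℝ)) := by ring
        _ ≤ (R ^ (2*(j:ℝ)-1) + R ^ (2*(j:ℝ)-2) * |c|) * |d3|⁻¹ * t ^ (2-(n:ℝ)) := by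
            gcongr

lemma aux_polyK_measurable (n j : ℕ) :
    Measurable (fun p : Euc n × Euc n => polyK n j p.1 p.2) := by
  have hnorm : Measurable fun p : Euc n × Euc n => ‖p.1 - p.2‖ :=
    (continuous_fst.sub continuous_snd).norm.measurable
  unfold polyK
  split_ifs with h1 h2
  · exact (hnorm.pow_const _).div_const _
  · exact (hnorm.pow_const _).div_const _
  · exact ((hnorm.pow_const _).mul
      ((Real.measurable_log.comp hnorm).add_const _)).div_const _

lemma aux_polyK_measurable_left (n j : ℕ) (X : Euc n) :
    Measurable (fun Q : Euc n => polyK n j X Q) := by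
  have hnorm : Measurable fun Q : Euc n => ‖X - Q‖ :=
    (continuous_const.sub continuous_id).norm.measurable
  unfold polyK
  split_ifs with h1 h2
  · exact (hnorm.pow_const _).div_const _
  · exact (hnorm.pow_const _).div_const _
  · exact ((hnorm.pow_const _).mul
      ((Real.measurable_log.comp hnorm).add_const _)).div_const _

lemma aux_schur_pointwise {α : Type*} [MeasurableSpace α] (σ : Measure α) (K h : α → ℝ≥0∞)
    (hK : AEMeasurable K σ) (hh : AEMeasurable h σ) {q : ℝ} (hq : 1 ≤ q) {A : ℝ≥0∞}
    (hA : ∫⁻ x, K x ∂σ ≤ A) :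
    (∫⁻ x, K x * h x ∂σ) ^ q ≤ A ^ (q-1) * ∫⁻ x, K x * (h x) ^ q ∂σ := by
  rcases eq_or_lt_of_le hq with hq1 | hq1
  · simp only [← hq1, ENNReal.rpow_one, sub_self, ENNReal.rpow_zero, one_mul]
    exact le_refl _
  · set q' := Real.conjExponent q with hq'def
    have hcon : q'.HolderConjugate q := (Real.HolderConjugate.conjExponent hq1).symm
    have hq'pos : 0 < q' := hcon.pos
    have hinv : 1/q' + 1/q = 1 := by
      have := hcon.inv_add_inv_eq_one
      simpa [one_div] using this
    have hqpos : (0:ℝ) < q := by linarith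
    have hsplit : ∀ x, K x * h x = (K x ^ (1/q')) * (K x ^ (1/q) * h x) := by
      intro x
      rw [show (K x ^ (1/q')) * (K x ^ (1/q) * h x) = (K x ^ (1/q') * K x ^ (1/q)) * h x
          from by ring, ← ENNReal.rpow_add_of_nonneg _ _ (by positivity) (by positivity),
        hinv, ENNReal.rpow_one]
    have hold := ENNReal.lintegral_mul_le_Lp_mul_Lq σ hcon
      ((hK.pow_const (1/q')) : AEMeasurable (fun x => K x ^ (1/q')) σ)
      ((hK.pow_const (1/q)).mul hh)
    simp only [Pi.mul_apply] at hold
    have hlhs : ∫⁻ x, K x * h x ∂σ = ∫⁻ x, (K x ^ (1/q')) * (K x ^ (1/q) * h x) ∂σ := by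
      congr 1; funext x; exact hsplit x
    have hK1 : ∫⁻ x, (K x ^ (1/q')) ^ q' ∂σ = ∫⁻ x, K x ∂σ := by
      congr 1; funext x
      rw [← ENNReal.rpow_mul, one_div, inv_mul_cancel₀ hq'pos.ne', ENNReal.rpow_one]
    have hK2 : ∫⁻ x, (K x ^ (1/q) * h x) ^ q ∂σ = ∫⁻ x, K x * (h x) ^ q ∂σ := by
      congr 1; funext x
      rw [ENNReal.mul_rpow_of_nonneg _ _ hqpos.le, ← ENNReal.rpow_mul, one_div,
        inv_mul_cancel₀ hqpos.ne', ENNReal.rpow_one]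
    rw [hlhs]
    calc (∫⁻ x, (K x ^ (1/q')) * (K x ^ (1/q) * h x) ∂σ) ^ q
        ≤ ((∫⁻ x, (K x ^ (1/q')) ^ q' ∂σ) ^ (1/q') *
            (∫⁻ x, (K x ^ (1/q) * h x) ^ q ∂σ) ^ (1/q)) ^ q :=
          ENNReal.rpow_le_rpow hold hqpos.le
      _ = ((∫⁻ x, K x ∂σ) ^ (1/q')) ^ q * ((∫⁻ x, K x * (h x) ^ q ∂σ) ^ (1/q)) ^ q := by
          rw [hK1, hK2, ENNReal.mul_rpow_of_nonneg _ _ hqpos.le]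
      _ = (∫⁻ x, K x ∂σ) ^ (q-1) * ∫⁻ x, K x * (h x) ^ q ∂σ := by
          have hexp1 : 1/q' * q = q - 1 := by
            rw [hcon.symm.conjugate_eq]
            have h0 : q - 1 ≠ 0 := by linarith
            field_simp
          have hexp2 : 1/q * q = 1 := by
            rw [one_div, inv_mul_cancel₀ hqpos.ne']
          rw [← ENNReal.rpow_mul, ← ENNReal.rpow_mul, hexp1, hexp2, ENNReal.rpow_one]
      _ ≤ A ^ (q-1) * ∫⁻ x, K x * (h x) ^ q ∂σ :=
          mul_le_mul_left (ENNReal.rpow_le_rpow hA (by linarith)) _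

end AuxiliaryLemmasForMlp

/-- `𝓜_j : L^p(∂D, σ) → L^p(D)` is bounded for `j ≥ 1` and
`1 ≤ p ≤ ∞`, the `L^p(D)` norm taken with respect to Lebesgue measure on `D`. -/
theorem mlp_Lp_bounded
    (n : ℕ) (hn : 3 ≤ n) (L : ℝ) (D : Set (Euc n)) (hD : IsBddLipschitzDomain n L D)
    (j : ℕ) (hj : 1 ≤ j) (p : ℝ≥0∞) (hp : 1 ≤ p) :
    ∃ C : ℝ, 0 < C ∧
      ∀ f : Euc n → ℝ, MemLp f p (surfMeasure n D) →
        eLpNorm (mlp n j (surfMeasure n D) f) p ((volume : Measure (Euc n)).restrict D)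
          ≤ ENNReal.ofReal C * eLpNorm f p (surfMeasure n D) := by
  classical
  have hn3 : (3:ℝ) ≤ (n:ℝ) := by exact_mod_cast hn
  obtain ⟨hDo, hDb, hDc, hFc, _⟩ := id hD
  set σ := surfMeasure n D with hσdef
  set μD := (volume : Measure (Euc n)).restrict D with hμDdef
  set R : ℝ := diam (closure D) + 1 with hRdef
  have hR1 : (1:ℝ) ≤ R := le_add_of_nonneg_left diam_nonneg
  have hdist : ∀ X ∈ closure D, ∀ Q ∈ closure D, dist X Q ≤ R := by
    intro X hX Q hQ
    have := dist_le_diam_of_mem hDb.closure hX hQ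
    linarith
  obtain ⟨Cσ, hCσ, hσfin, hσball⟩ := aux_ahlfors n hn L D hD
  haveI : IsFiniteMeasure σ := ⟨hσfin.lt_top⟩
  obtain ⟨CK, hCK0, hCK⟩ := aux_polyK_bound n j hn hj R hR1
  obtain ⟨Sσ, hSσ, hSσle⟩ := aux_dyadic n σ (a := 2 - (n:ℝ)) (d := (n:ℝ) - 1) hR1
    (by linarith) (by linarith) hCσ (fun X r hr => hσball X r hr)
  -- volume ball bound
  haveI : Nonempty (Fin n) := ⟨⟨0, by omega⟩⟩
  set CV : ℝ≥0∞ := ENNReal.ofReal (Real.sqrt Real.pi ^ n / Real.Gamma ((n:ℝ)/2 + 1)) with hCVdef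
  have hCV : CV ≠ ∞ := ENNReal.ofReal_ne_top
  have hvol : ∀ (X : Euc n) (r : ℝ), 0 < r → μD (ball X r) ≤ CV * ENNReal.ofReal (r ^ (n:ℝ)) := by
    intro X r hr
    have h1 : μD (ball X r) ≤ volume (ball X r) := by
      rw [hμDdef, Measure.restrict_apply measurableSet_ball]
      exact measure_mono inter_subset_left
    refine h1.trans ?_
    rw [EuclideanSpace.volume_ball (Fin n) X r]
    simp only [Fintype.card_fin]
    rw [← ENNReal.ofReal_pow hr.le, mul_comm]
    gcongr
    rw [← Real.rpow_natCast r n]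
  obtain ⟨SD, hSD, hSDle⟩ := aux_dyadic n μD (a := 2 - (n:ℝ)) (d := (n:ℝ)) hR1
    (by linarith) (by linarith) hCV hvol
  set A := ENNReal.ofReal CK * Sσ with hAdef
  have hAne : A ≠ ∞ := ENNReal.mul_ne_top ENNReal.ofReal_ne_top hSσ
  set B := ENNReal.ofReal CK * SD with hBdef
  have hBne : B ≠ ∞ := ENNReal.mul_ne_top ENNReal.ofReal_ne_top hSD
  have hDmeas : MeasurableSet D := hDo.measurableSet
  have hFmeas : MeasurableSet (frontier D) := isClosed_frontier.measurableSet
  have haeF : ∀ᵐ Q ∂σ, Q ∈ frontier D := by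
    rw [hσdef]
    exact ae_restrict_mem hFmeas
  have haeD : ∀ᵐ X ∂μD, X ∈ D := by
    rw [hμDdef]
    exact ae_restrict_mem hDmeas
  have hne : ∀ X ∈ D, ∀ Q ∈ frontier D, X ≠ Q := by
    intro X hX Q hQ h
    subst h
    rw [hDo.frontier_eq] at hQ
    exact hQ.2 hX
  -- uniform bounds on kernel integrals
  have hKbd_σ : ∀ X ∈ D, ∫⁻ Q, (‖polyK n j X Q‖₊ : ℝ≥0∞) ∂σ ≤ A := by
    intro X hX
    have h1 : ∀ᵐ Q ∂σ, (‖polyK n j X Q‖₊ : ℝ≥0∞) ≤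
        ENNReal.ofReal CK * ENNReal.ofReal (dist X Q ^ (2 - (n:ℝ))) := by
      filter_upwards [haeF] with Q hQ
      rw [← enorm_eq_nnnorm, Real.enorm_eq_ofReal_abs, ← ENNReal.ofReal_mul hCK0]
      exact ENNReal.ofReal_le_ofReal
        (hCK X Q (hne X hX Q hQ)
          (hdist X (subset_closure hX) Q (frontier_subset_closure hQ)))
    calc ∫⁻ Q, (‖polyK n j X Q‖₊ : ℝ≥0∞) ∂σ
        ≤ ∫⁻ Q, ENNReal.ofReal CK * ENNReal.ofReal (dist X Q ^ (2 - (n:ℝ))) ∂σ :=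
          lintegral_mono_ae h1
      _ = ENNReal.ofReal CK * ∫⁻ Q, ENNReal.ofReal (dist X Q ^ (2 - (n:ℝ))) ∂σ :=
          lintegral_const_mul' _ _ ENNReal.ofReal_ne_top
      _ ≤ ENNReal.ofReal CK * Sσ := by
          gcongr
          apply hSσle X
          filter_upwards [haeF] with Q hQ
          exact hdist X (subset_closure hX) Q (frontier_subset_closure hQ)
  have hKbd_D : ∀ Q ∈ frontier D, ∫⁻ X, (‖polyK n j X Q‖₊ : ℝ≥0∞) ∂μD ≤ B := by
    intro Q hQ
    have h1 : ∀ᵐ X ∂μD, (‖polyK n j X Q‖₊ : ℝ≥0∞) ≤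
        ENNReal.ofReal CK * ENNReal.ofReal (dist Q X ^ (2 - (n:ℝ))) := by
      filter_upwards [haeD] with X hX
      rw [← enorm_eq_nnnorm, Real.enorm_eq_ofReal_abs, ← ENNReal.ofReal_mul hCK0, dist_comm]
      exact ENNReal.ofReal_le_ofReal
        (hCK X Q (hne X hX Q hQ)
          (hdist X (subset_closure hX) Q (frontier_subset_closure hQ)))
    calc ∫⁻ X, (‖polyK n j X Q‖₊ : ℝ≥0∞) ∂μD
        ≤ ∫⁻ X, ENNReal.ofReal CK * ENNReal.ofReal (dist Q X ^ (2 - (n:ℝ))) ∂μD :=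
          lintegral_mono_ae h1
      _ = ENNReal.ofReal CK * ∫⁻ X, ENNReal.ofReal (dist Q X ^ (2 - (n:ℝ))) ∂μD :=
          lintegral_const_mul' _ _ ENNReal.ofReal_ne_top
      _ ≤ ENNReal.ofReal CK * SD := by
          gcongr
          apply hSDle Q
          filter_upwards [haeD] with X hX
          rw [dist_comm]
          exact hdist X (subset_closure hX) Q (frontier_subset_closure hQ)
  rcases eq_or_ne p ⊤ with hptop | hptop
  · -- p = ∞
    refine ⟨A.toReal + 1, by positivity, ?_⟩
    intro f hf
    set g := hf.1.mk f with hgdef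
    have hgm : StronglyMeasurable g := hf.1.stronglyMeasurable_mk
    have hfg : f =ᵐ[σ] g := hf.1.ae_eq_mk
    have hmlp : mlp n j σ f = mlp n j σ g :=
      funext fun X => integral_congr_ae (hfg.mono fun Q hQ => by dsimp only; rw [hQ])
    rw [hmlp, eLpNorm_congr_ae hfg]
    subst hptop
    set M := eLpNormEssSup g σ with hMdef
    have hM : M ≠ ∞ := by
      rw [hMdef, ← eLpNorm_exponent_top, ← eLpNorm_congr_ae hfg]
      exact hf.2.ne
    have hg_ae : ∀ᵐ Q ∂σ, (‖g Q‖₊ : ℝ≥0∞) ≤ M := ae_le_eLpNormEssSup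
    have hbound : ∀ᵐ X ∂μD, (‖mlp n j σ g X‖₊ : ℝ≥0∞) ≤ A * M := by
      filter_upwards [haeD] with X hX
      have e0 : mlp n j σ g X = ∫ Q, polyK n j X Q * g Q ∂σ := rfl
      calc (‖mlp n j σ g X‖₊ : ℝ≥0∞)
          ≤ ∫⁻ Q, (‖polyK n j X Q * g Q‖₊ : ℝ≥0∞) ∂σ := by
            rw [e0]; exact enorm_integral_le_lintegral_enorm _
        _ = ∫⁻ Q, (‖polyK n j X Q‖₊ : ℝ≥0∞) * (‖g Q‖₊ : ℝ≥0∞) ∂σ := by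
            simp only [nnnorm_mul, ENNReal.coe_mul]
        _ ≤ ∫⁻ Q, (‖polyK n j X Q‖₊ : ℝ≥0∞) * M ∂σ :=
            lintegral_mono_ae (hg_ae.mono fun Q hQ => mul_le_mul_right hQ _)
        _ = (∫⁻ Q, (‖polyK n j X Q‖₊ : ℝ≥0∞) ∂σ) * M := lintegral_mul_const' _ _ hM
        _ ≤ A * M := mul_le_mul_left (hKbd_σ X hX) M
    rw [eLpNorm_exponent_top, eLpNorm_exponent_top, ← hMdef, eLpNormEssSup]
    refine (essSup_le_of_ae_le _ hbound).trans ?_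
    refine mul_le_mul_left ?_ M
    calc A = ENNReal.ofReal A.toReal := (ENNReal.ofReal_toReal hAne).symm
      _ ≤ ENNReal.ofReal (A.toReal + 1) := ENNReal.ofReal_le_ofReal (by linarith)
  · -- p < ∞
    have hp0 : p ≠ 0 := by
      intro h
      rw [h] at hp
      exact absurd hp (by simp)
    set q := p.toReal with hqdef
    have hq1 : (1:ℝ) ≤ q := by
      rw [hqdef, ← ENNReal.toReal_one]
      exact ENNReal.toReal_mono hptop hp
    have hq0 : (0:ℝ) < q := by linarith
    set Ctot := (A ^ (q-1) * B) ^ (1/q) with hCtdef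
    have hCtne : Ctot ≠ ∞ :=
      ENNReal.rpow_ne_top_of_nonneg (by positivity)
        (ENNReal.mul_ne_top (ENNReal.rpow_ne_top_of_nonneg (by linarith) hAne) hBne)
    refine ⟨Ctot.toReal + 1, by positivity, ?_⟩
    intro f hf
    set g := hf.1.mk f with hgdef
    have hgm : StronglyMeasurable g := hf.1.stronglyMeasurable_mk
    have hfg : f =ᵐ[σ] g := hf.1.ae_eq_mk
    have hmlp : mlp n j σ f = mlp n j σ g :=
      funext fun X => integral_congr_ae (hfg.mono fun Q hQ => by dsimp only; rw [hQ])
    rw [hmlp, eLpNorm_congr_ae hfg]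
    have hgmeas : Measurable g := hgm.measurable
    have hKmeas : Measurable (fun pq : Euc n × Euc n => (‖polyK n j pq.1 pq.2‖₊ : ℝ≥0∞)) :=
      (aux_polyK_measurable n j).nnnorm.coe_nnreal_ennreal
    have hKmeasX : ∀ X : Euc n, Measurable (fun Q => (‖polyK n j X Q‖₊ : ℝ≥0∞)) :=
      fun X => (aux_polyK_measurable_left n j X).nnnorm.coe_nnreal_ennreal
    have hh : Measurable (fun Q => (‖g Q‖₊ : ℝ≥0∞)) := hgmeas.nnnorm.coe_nnreal_ennreal
    have hpt : ∀ X ∈ D, (‖mlp n j σ g X‖₊ : ℝ≥0∞) ^ q ≤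
        A ^ (q-1) * ∫⁻ Q, (‖polyK n j X Q‖₊ : ℝ≥0∞) * (‖g Q‖₊ : ℝ≥0∞) ^ q ∂σ := by
      intro X hX
      have e0 : mlp n j σ g X = ∫ Q, polyK n j X Q * g Q ∂σ := rfl
      have h1 : (‖mlp n j σ g X‖₊ : ℝ≥0∞) ≤
          ∫⁻ Q, (‖polyK n j X Q‖₊ : ℝ≥0∞) * (‖g Q‖₊ : ℝ≥0∞) ∂σ := by
        rw [e0]
        refine (enorm_integral_le_lintegral_enorm _).trans_eq ?_
        simp only [enorm_eq_nnnorm, nnnorm_mul, ENNReal.coe_mul]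
      calc (‖mlp n j σ g X‖₊ : ℝ≥0∞) ^ q
          ≤ (∫⁻ Q, (‖polyK n j X Q‖₊ : ℝ≥0∞) * (‖g Q‖₊ : ℝ≥0∞) ∂σ) ^ q :=
            ENNReal.rpow_le_rpow h1 hq0.le
        _ ≤ A ^ (q-1) * ∫⁻ Q, (‖polyK n j X Q‖₊ : ℝ≥0∞) * (‖g Q‖₊ : ℝ≥0∞) ^ q ∂σ :=
            aux_schur_pointwise σ _ _ (hKmeasX X).aemeasurable hh.aemeasurable hq1
              (hKbd_σ X hX)
    rw [eLpNorm_eq_lintegral_rpow_enorm_toReal hp0 hptop,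
      eLpNorm_eq_lintegral_rpow_enorm_toReal hp0 hptop]
    have hswapmeas : AEMeasurable
        (Function.uncurry fun X Q => (‖polyK n j X Q‖₊ : ℝ≥0∞) * (‖g Q‖₊ : ℝ≥0∞) ^ q)
        (μD.prod σ) := by
      apply Measurable.aemeasurable
      have : Measurable (fun pq : Euc n × Euc n =>
          (‖polyK n j pq.1 pq.2‖₊ : ℝ≥0∞) * (‖g pq.2‖₊ : ℝ≥0∞) ^ q) :=
        hKmeas.mul ((hh.comp measurable_snd).pow_const q)
      exact this
    have hstep : ∫⁻ X, (‖mlp n j σ g X‖₊ : ℝ≥0∞) ^ q ∂μD ≤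
        A ^ (q-1) * B * ∫⁻ Q, (‖g Q‖₊ : ℝ≥0∞) ^ q ∂σ := by
      have hAq : A ^ (q-1) ≠ ∞ := ENNReal.rpow_ne_top_of_nonneg (by linarith) hAne
      calc ∫⁻ X, (‖mlp n j σ g X‖₊ : ℝ≥0∞) ^ q ∂μD
          ≤ ∫⁻ X, A ^ (q-1) *
              ∫⁻ Q, (‖polyK n j X Q‖₊ : ℝ≥0∞) * (‖g Q‖₊ : ℝ≥0∞) ^ q ∂σ ∂μD :=
            lintegral_mono_ae (haeD.mono hpt)
        _ = A ^ (q-1) * ∫⁻ X,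
              ∫⁻ Q, (‖polyK n j X Q‖₊ : ℝ≥0∞) * (‖g Q‖₊ : ℝ≥0∞) ^ q ∂σ ∂μD :=
            lintegral_const_mul' _ _ hAq
        _ = A ^ (q-1) * ∫⁻ Q,
              ∫⁻ X, (‖polyK n j X Q‖₊ : ℝ≥0∞) * (‖g Q‖₊ : ℝ≥0∞) ^ q ∂μD ∂σ := by
            congr 1
            exact lintegral_lintegral_swap hswapmeas
        _ = A ^ (q-1) * ∫⁻ Q,
              (∫⁻ X, (‖polyK n j X Q‖₊ : ℝ≥0∞) ∂μD) * (‖g Q‖₊ : ℝ≥0∞) ^ q ∂σ := by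
            congr 1
            congr 1
            funext Q
            exact lintegral_mul_const' _ _
              (ENNReal.rpow_ne_top_of_nonneg hq0.le ENNReal.coe_ne_top)
        _ ≤ A ^ (q-1) * ∫⁻ Q, B * (‖g Q‖₊ : ℝ≥0∞) ^ q ∂σ := by
            apply mul_le_mul_right
            apply lintegral_mono_ae
            filter_upwards [haeF] with Q hQ
            exact mul_le_mul_left (hKbd_D Q hQ) _
        _ = A ^ (q-1) * (B * ∫⁻ Q, (‖g Q‖₊ : ℝ≥0∞) ^ q ∂σ) := by
            rw [lintegral_const_mul' B _ hBne]
        _ = A ^ (q-1) * B * ∫⁻ Q, (‖g Q‖₊ : ℝ≥0∞) ^ q ∂σ := by ring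
    calc (∫⁻ X, (‖mlp n j σ g X‖₊ : ℝ≥0∞) ^ q ∂μD) ^ (1/q)
        ≤ (A ^ (q-1) * B * ∫⁻ Q, (‖g Q‖₊ : ℝ≥0∞) ^ q ∂σ) ^ (1/q) :=
          ENNReal.rpow_le_rpow hstep (by positivity)
      _ = Ctot * (∫⁻ Q, (‖g Q‖₊ : ℝ≥0∞) ^ q ∂σ) ^ (1/q) := by
          rw [hCtdef, ← ENNReal.mul_rpow_of_nonneg _ _ (by positivity : (0:ℝ) ≤ 1/q)]
      _ ≤ ENNReal.ofReal (Ctot.toReal + 1) * (∫⁻ Q, (‖g Q‖₊ : ℝ≥0∞) ^ q ∂σ) ^ (1/q) := by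
          apply mul_le_mul_left
          calc Ctot = ENNReal.ofReal Ctot.toReal := (ENNReal.ofReal_toReal hCtne).symm
            _ ≤ ENNReal.ofReal (Ctot.toReal + 1) := ENNReal.ofReal_le_ofReal (by linarith)
end
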